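/- For α, β > -1, n ≥ 1, x ∈ (0,1), and f ∈ C¹[0,1], the identity B_n^{α,β}(ψ·f'; x) = B_n^{α,β}([(t-x)(n+α+β+2) + (x(α+β+2) - (α+1))]·f(t); x) holds, where ψ(t) = t(1-t). -/

import Mathlib

open MeasureTheory intervalIntegral Filter

/-- The Beta operator with Jacobi weights: `B_n^{α,β}(f;x)`. -/
noncomputable def Bop (n α β : ℝ) (f : ℝ → ℝ) (x : ℝ) : ℝ :=
  (∫ t in (0:ℝ)..1, t ^ (n * x + α) * (1 - t) ^ (n - n * x + β) * f t) /
  (∫ t in (0:ℝ)..1, t ^ (n * x + α) * (1 - t) ^ (n - n * x + β))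

/-- The `m`-th central moment `T_{n,m}^{α,β}(x)`. -/
noncomputable def T (n α β : ℝ) (m : ℕ) (x : ℝ) : ℝ :=
  Bop n α β (fun t => (t - x) ^ m) x
theorem beta_op_psi_deriv_identity (α β : ℝ) (hα : α > -1) (hβ : β > -1)
    (n : ℕ) (hn : 1 ≤ n) (x : ℝ) (hx : x ∈ Set.Ioo (0:ℝ) 1)
    (f : ℝ → ℝ) (hf : ContDiffOn ℝ 1 f (Set.Icc (0:ℝ) 1)) :
    Bop n α β (fun t => t * (1 - t) * derivWithin f (Set.Icc (0:ℝ) 1) t) x =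
      Bop n α β
        (fun t => ((t - x) * (n + α + β + 2) + (x * (α + β + 2) - (α + 1))) * f t) x := by
  obtain ⟨hx0, hx1⟩ := hx
  have hn1 : (1:ℝ) ≤ (n:ℝ) := by exact_mod_cast hn
  set a : ℝ := (n:ℝ) * x + α with ha_def
  set b : ℝ := (n:ℝ) - (n:ℝ) * x + β with hb_def
  have hnx : 0 < (n:ℝ) * x := by positivity
  have hnx1 : 0 < (n:ℝ) * (1 - x) := by
    have : (0:ℝ) < 1 - x := by linarith
    positivity
  have ha1 : 0 < a + 1 := by rw [ha_def]; nlinarith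
  have hb1 : 0 < b + 1 := by rw [hb_def]; nlinarith
  have ha1' : -1 < a := by linarith
  have hb1' : -1 < b := by linarith
  set f' : ℝ → ℝ := derivWithin f (Set.Icc (0:ℝ) 1) with hf'_def
  have hfc : ContinuousOn f (Set.Icc (0:ℝ) 1) := hf.continuousOn
  have hf'c : ContinuousOn f' (Set.Icc (0:ℝ) 1) :=
    hf.continuousOn_derivWithin (uniqueDiffOn_Icc zero_lt_one) le_rfl
  have hUIcc : Set.uIcc (0:ℝ) 1 = Set.Icc (0:ℝ) 1 := Set.uIcc_of_le zero_le_one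
  set u : ℝ → ℝ := fun t => t ^ (a+1) * (1-t) ^ (b+1) with hu_def
  set v : ℝ → ℝ := fun t =>
    (a+1) * t ^ a * (1-t) ^ (b+1) - (b+1) * t ^ (a+1) * (1-t) ^ b with hv_def
  -- continuity of u
  have hucont : Continuous u := by
    rw [hu_def]
    exact (Real.continuous_rpow_const ha1.le).mul
      ((Real.continuous_rpow_const hb1.le).comp (continuous_const.sub continuous_id))
  -- derivative of u * f on the open interval
  have hderiv : ∀ t ∈ Set.Ioo (0:ℝ) 1,
      HasDerivAt (fun t => u t * f t) (v t * f t + u t * f' t) t := by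
    intro t ht
    obtain ⟨ht0, ht1⟩ := ht
    have h1t : (0:ℝ) < 1 - t := by linarith
    have hft : HasDerivAt f (f' t) t := by
      have h1 : Set.Icc (0:ℝ) 1 ∈ nhds t := Icc_mem_nhds ht0 ht1
      exact (((hf.differentiableOn one_ne_zero) t ⟨ht0.le, ht1.le⟩).hasDerivWithinAt).hasDerivAt h1
    have h2 : HasDerivAt (fun s : ℝ => (1 - s) ^ (b+1))
        (-((b+1) * (1-t) ^ b)) t := by
      have hcomp := (Real.hasDerivAt_rpow_const (p := b+1) (Or.inl h1t.ne')).comp t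
        ((hasDerivAt_const t (1:ℝ)).sub (hasDerivAt_id t))
      have : (b + 1) * (1 - t) ^ (b + 1 - 1) * (0 - 1) = -((b+1) * (1-t) ^ b) := by
        rw [show b + 1 - 1 = b from by ring]; ring
      rw [← this]; exact hcomp
    have h3 : HasDerivAt (fun s : ℝ => s ^ (a+1)) ((a+1) * t ^ a) t := by
      have := Real.hasDerivAt_rpow_const (x := t) (p := a+1) (Or.inl ht0.ne')
      simpa [show a + 1 - 1 = a from by ring] using this
    have hu' : HasDerivAt u (v t) t := by
      have := h3.fun_mul h2
      rw [hv_def]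
      exact this.congr_deriv (by ring)
    have := hu'.fun_mul hft
    simpa [hu_def] using this
  -- integrability of v * f
  have hint1 : IntervalIntegrable (fun t => (a+1) * t ^ a * (1-t) ^ (b+1) * f t)
      volume 0 1 := by
    have h0 : IntervalIntegrable (fun t : ℝ => t ^ a) volume 0 1 :=
      intervalIntegral.intervalIntegrable_rpow' ha1'
    have h1 : IntervalIntegrable
        (fun t : ℝ => t ^ a * ((a+1) * (1-t) ^ (b+1) * f t)) volume 0 1 := by
      apply h0.mul_continuousOn
      apply ContinuousOn.mul
      · exact (continuous_const.mul ((Real.continuous_rpow_const hb1.le).comp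
          (continuous_const.sub continuous_id))).continuousOn
      · rw [hUIcc]; exact hfc
    have : (fun t : ℝ => (a+1) * t ^ a * (1-t) ^ (b+1) * f t)
        = fun t : ℝ => t ^ a * ((a+1) * (1-t) ^ (b+1) * f t) := by
      funext t; ring
    rw [this]; exact h1
  have hint2 : IntervalIntegrable (fun t => (b+1) * t ^ (a+1) * (1-t) ^ b * f t)
      volume 0 1 := by
    have h0 : IntervalIntegrable (fun t : ℝ => (1 - t) ^ b) volume 0 1 := by
      have := (intervalIntegral.intervalIntegrable_rpow' hb1' (a := 0) (b := 1)).comp_sub_left 1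
      simpa using this.symm
    have h1 : IntervalIntegrable
        (fun t : ℝ => (1-t) ^ b * ((b+1) * t ^ (a+1) * f t)) volume 0 1 := by
      apply h0.mul_continuousOn
      apply ContinuousOn.mul
      · exact (continuous_const.mul (Real.continuous_rpow_const ha1.le)).continuousOn
      · rw [hUIcc]; exact hfc
    have : (fun t : ℝ => (b+1) * t ^ (a+1) * (1-t) ^ b * f t)
        = fun t : ℝ => (1-t) ^ b * ((b+1) * t ^ (a+1) * f t) := by
      funext t; ring
    rw [this]; exact h1
  have hintvf : IntervalIntegrable (fun t => v t * f t) volume 0 1 := by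
    have : (fun t => v t * f t) = fun t =>
        (a+1) * t ^ a * (1-t) ^ (b+1) * f t - (b+1) * t ^ (a+1) * (1-t) ^ b * f t := by
      funext t; rw [hv_def]; ring
    rw [this]; exact hint1.sub hint2
  have hintuf' : IntervalIntegrable (fun t => u t * f' t) volume 0 1 := by
    apply ContinuousOn.intervalIntegrable
    rw [hUIcc]
    exact hucont.continuousOn.mul hf'c
  -- FTC
  have key : (∫ t in (0:ℝ)..1, (v t * f t + u t * f' t)) = 0 := by
    have hcont : ContinuousOn (fun t => u t * f t) (Set.Icc (0:ℝ) 1) :=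
      hucont.continuousOn.mul hfc
    have := intervalIntegral.integral_eq_sub_of_hasDerivAt_of_le zero_le_one hcont hderiv
      (hintvf.add hintuf')
    rw [this]
    simp [hu_def, Real.zero_rpow ha1.ne', Real.zero_rpow hb1.ne']
  have hsum := intervalIntegral.integral_add hintvf hintuf'
  have key2 : (∫ t in (0:ℝ)..1, u t * f' t) = -∫ t in (0:ℝ)..1, v t * f t := by
    rw [hsum] at key; linarith
  -- identify the numerators
  have hnum1 : (∫ t in (0:ℝ)..1, t ^ ((n:ℝ) * x + α) * (1 - t) ^ ((n:ℝ) - (n:ℝ) * x + β) *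
      (t * (1 - t) * f' t)) = ∫ t in (0:ℝ)..1, u t * f' t := by
    apply intervalIntegral.integral_congr
    rw [hUIcc]
    intro t ht
    obtain ⟨ht0, ht1⟩ := ht
    rcases eq_or_lt_of_le ht0 with h0 | h0
    · simp [hu_def, ← h0, Real.zero_rpow ha1.ne']
    rcases eq_or_lt_of_le ht1 with h1 | h1
    · simp [hu_def, h1, Real.zero_rpow hb1.ne']
    have h1t : (1:ℝ) - t ≠ 0 := by linarith
    simp only [hu_def, ← ha_def, ← hb_def]
    rw [Real.rpow_add_one h0.ne', Real.rpow_add_one h1t]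
    ring
  have hnum2 : (∫ t in (0:ℝ)..1, t ^ ((n:ℝ) * x + α) * (1 - t) ^ ((n:ℝ) - (n:ℝ) * x + β) *
      (((t - x) * ((n:ℝ) + α + β + 2) + (x * (α + β + 2) - (α + 1))) * f t))
      = -∫ t in (0:ℝ)..1, v t * f t := by
    rw [← intervalIntegral.integral_neg]
    apply intervalIntegral.integral_congr
    rw [hUIcc]
    intro t ht
    obtain ⟨ht0, ht1⟩ := ht
    rcases eq_or_lt_of_le ht0 with h0 | h0
    · simp only [hv_def, ← h0, Real.zero_rpow ha1.ne', Real.one_rpow, Real.rpow_natCast]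
      rw [ha_def, hb_def]
      simp [Real.one_rpow]
      ring
    rcases eq_or_lt_of_le ht1 with h1 | h1
    · simp only [hv_def, h1]
      rw [ha_def, hb_def]
      simp [Real.zero_rpow hb1.ne', Real.zero_rpow (show (n:ℝ) - (n:ℝ)*x + β + 1 ≠ 0 from hb1.ne'), Real.one_rpow]
      ring
    have h1t : (1:ℝ) - t ≠ 0 := by linarith
    simp only [hv_def, ← ha_def, ← hb_def]
    rw [Real.rpow_add_one h0.ne', Real.rpow_add_one h1t, ha_def, hb_def]
    ring
  -- conclude
  unfold Bop
  congr 1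
  rw [hnum1, hnum2, key2]
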